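/- Let u be a unitary operator on H with u − 1 compact, and set q_i := u p_i u* for all i ≥ 0 (including q_0 = u p_0 u*). Then: (a) for every ξ ∈ H the series Σ_{i≥0} q_i p_i ξ converges in H, defining a bounded operator s with s ξ = Σ_{i≥0} q_i p_i ξ; (b) s − 1 is compact; (c) s p_i = q_i s for every i ≥ 0; and (d) if C ≥ 0 satisfies ‖u·P(u*·y) − P(y)‖ ≤ C for every compact y with ‖y‖ ≤ 1, then ‖s − 1‖ ≤ 3C. -/

import Mathlib

set_option linter.unusedSectionVars false
set_option linter.unusedVariables false

/-- The pinching operator associated with a family of mutually orthogonal projections. -/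
noncomputable def pinch {H : Type*} [NormedAddCommGroup H] [InnerProductSpace ℂ H]
    (p : ℕ → H →L[ℂ] H) (x : H →L[ℂ] H) : H →L[ℂ] H :=
  ∑' i, p i * x * p i

/-- The family `{p_i}_{i ≥ 0}` obtained by adjoining the complementary projection `p₀`. -/
def extFam {H : Type*} [NormedAddCommGroup H] [InnerProductSpace ℂ H]
    (p0 : H →L[ℂ] H) (p : ℕ → H →L[ℂ] H) : ℕ → H →L[ℂ] H
  | 0 => p0
  | n + 1 => p n

namespace PinchAux

variable {H : Type*} [NormedAddCommGroup H] [InnerProductSpace ℂ H] [CompleteSpace H]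

local notation "⟪" x ", " y "⟫" => @inner ℂ _ _ x y

lemma sa_inner {A : H →L[ℂ] H} (hA : IsSelfAdjoint A) (x y : H) :
    ⟪A x, y⟫ = ⟪x, A y⟫ := by
  conv_lhs => rw [← hA.star_eq, ContinuousLinearMap.star_eq_adjoint]
  exact ContinuousLinearMap.adjoint_inner_left A y x

lemma contraction {A : H →L[ℂ] H} (hA : IsSelfAdjoint A) (hA2 : A * A = A) (v : H) :
    ‖A v‖ ≤ ‖v‖ := by
  have h1 : ⟪A v, A v⟫ = ⟪v, A v⟫ := by
    rw [sa_inner hA]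
    congr 1
    rw [← ContinuousLinearMap.mul_apply, hA2]
  have h2 : ‖A v‖ ^ 2 = ‖(⟪v, A v⟫ : ℂ)‖ := by
    rw [← h1, inner_self_eq_norm_sq_to_K]
    simp [norm_pow]
  have h3 : ‖A v‖ ^ 2 ≤ ‖v‖ * ‖A v‖ := h2 ▸ norm_inner_le_norm v (A v)
  rcases eq_or_lt_of_le (norm_nonneg (A v)) with h | h
  · rw [← h]; exact norm_nonneg v
  · nlinarith

section Family

variable {ι : Type*} [DecidableEq ι] {A : ι → H →L[ℂ] H}
  (hA1 : ∀ i, IsSelfAdjoint (A i)) (hA2 : ∀ i, A i * A i = A i)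
  (hA3 : ∀ i j, i ≠ j → A i * A j = 0)

include hA1 hA2 hA3

lemma sum_sa (F : Finset ι) : IsSelfAdjoint (∑ i ∈ F, A i) := by
  unfold IsSelfAdjoint
  rw [star_sum]
  exact Finset.sum_congr rfl fun i _ => (hA1 i).star_eq

lemma sum_idem (F : Finset ι) : (∑ i ∈ F, A i) * (∑ j ∈ F, A j) = ∑ i ∈ F, A i := by
  rw [Finset.sum_mul_sum]
  refine Finset.sum_congr rfl fun i hi => ?_
  rw [Finset.sum_eq_single i (fun j _ hj => hA3 i j (Ne.symm hj)) (fun h => absurd hi h)]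
  exact hA2 i

lemma norm_sum_apply_le (F : Finset ι) (v : H) : ‖∑ i ∈ F, A i v‖ ≤ ‖v‖ := by
  have := contraction (sum_sa hA1 hA2 hA3 F) (sum_idem hA1 hA2 hA3 F) v
  rwa [ContinuousLinearMap.sum_apply] at this

lemma inner_apply_orth (i j : ι) (hij : i ≠ j) (x y : H) : ⟪A i x, A j y⟫ = 0 := by
  rw [sa_inner (hA1 i), ← ContinuousLinearMap.mul_apply, hA3 i j hij]
  simp

lemma norm_sum_sq (F : Finset ι) (v : ι → H) (hv : ∀ i ∈ F, A i (v i) = v i) :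
    ‖∑ i ∈ F, v i‖ ^ 2 = ∑ i ∈ F, ‖v i‖ ^ 2 := by
  have key : (⟪∑ i ∈ F, v i, ∑ j ∈ F, v j⟫ : ℂ) = ∑ i ∈ F, (‖v i‖ : ℂ) ^ 2 := by
    rw [sum_inner]
    refine Finset.sum_congr rfl fun i hi => ?_
    rw [inner_sum, Finset.sum_eq_single i
      (fun j hj hji => by
        rw [← hv i hi, ← hv j hj]; exact inner_apply_orth hA1 hA2 hA3 i j (Ne.symm hji) _ _)
      (fun h => absurd hi h)]
    exact inner_self_eq_norm_sq_to_K _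
  have key2 : ((‖∑ i ∈ F, v i‖ ^ 2 : ℝ) : ℂ) = ((∑ i ∈ F, ‖v i‖ ^ 2 : ℝ) : ℂ) := by
    push_cast
    rw [← key, inner_self_eq_norm_sq_to_K]
    rfl
  exact_mod_cast key2

lemma bessel (F : Finset ι) (ξ : H) : ∑ i ∈ F, ‖A i ξ‖ ^ 2 ≤ ‖ξ‖ ^ 2 := by
  rw [← norm_sum_sq hA1 hA2 hA3 F (fun i => A i ξ)
    (fun i _ => by rw [← ContinuousLinearMap.mul_apply, hA2])]
  have h := norm_sum_apply_le hA1 hA2 hA3 F ξ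
  exact pow_le_pow_left₀ (norm_nonneg _) h 2

omit hA1 hA2 hA3 in
lemma summable_sq (ξ : H) {B : ℕ → H →L[ℂ] H} (hB1 : ∀ i, IsSelfAdjoint (B i))
    (hB2 : ∀ i, B i * B i = B i) (hB3 : ∀ i j, i ≠ j → B i * B j = 0) :
    Summable fun i => ‖B i ξ‖ ^ 2 :=
  summable_of_sum_le (fun i => sq_nonneg _) (fun F => bessel hB1 hB2 hB3 F ξ)

end Family

end PinchAux

namespace PinchAux

variable {H : Type*} [NormedAddCommGroup H] [InnerProductSpace ℂ H] [CompleteSpace H]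

local notation "⟪" x ", " y "⟫" => @inner ℂ _ _ x y

/-- Orthogonal pieces with square-summable norms are summable. -/
lemma summable_of_orth {B : ℕ → H →L[ℂ] H} (hB1 : ∀ i, IsSelfAdjoint (B i))
    (hB2 : ∀ i, B i * B i = B i) (hB3 : ∀ i j, i ≠ j → B i * B j = 0)
    (v : ℕ → H) (hv : ∀ i, B i (v i) = v i) (hsq : Summable fun i => ‖v i‖ ^ 2) :
    Summable v := by
  rw [summable_iff_vanishing_norm]
  intro ε hε
  obtain ⟨s, hs⟩ := summable_iff_vanishing_norm.1 hsq (ε ^ 2) (by positivity)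
  refine ⟨s, fun t ht => ?_⟩
  have h1 : ‖∑ i ∈ t, v i‖ ^ 2 = ∑ i ∈ t, ‖v i‖ ^ 2 :=
    norm_sum_sq hB1 hB2 hB3 t v (fun i _ => hv i)
  have h2 := hs t ht
  have h3 : ∑ i ∈ t, ‖v i‖ ^ 2 < ε ^ 2 :=
    lt_of_le_of_lt (le_abs_self _) (by rwa [← Real.norm_eq_abs])
  nlinarith [norm_nonneg (∑ i ∈ t, v i)]

section Main

variable (p : ℕ → H →L[ℂ] H)
  (hsa : ∀ i, IsSelfAdjoint (p i))
  (hidem : ∀ i, p i * p i = p i)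
  (horth : ∀ i j, i ≠ j → p i * p j = 0)
  (p0 : H →L[ℂ] H) (hp0sa : IsSelfAdjoint p0) (hp0idem : p0 * p0 = p0)
  (hp0fix : ∀ ξ : H, p0 ξ = ξ ↔ ∀ i, p i ξ = 0)

include hsa hidem horth hp0sa hp0idem hp0fix

lemma p0_mul_p (i : ℕ) : p0 * p i = 0 := by
  ext ξ
  simp only [ContinuousLinearMap.mul_apply, ContinuousLinearMap.zero_apply]
  set w := p0 (p i ξ) with hw
  have hww : p0 w = w := by
    rw [hw, ← ContinuousLinearMap.mul_apply, hp0idem]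
  have hpw : ∀ j, p j w = 0 := (hp0fix w).1 hww
  have key : (⟪w, w⟫ : ℂ) = 0 := by
    have h1 : (⟪p0 w, p i ξ⟫ : ℂ) = ⟪w, w⟫ := by
      rw [sa_inner hp0sa, ← hw]
    have h2 : (⟪p0 w, p i ξ⟫ : ℂ) = 0 := by
      rw [hww]
      have h3 : (⟪w, p i ξ⟫ : ℂ) = ⟪w, p i (p i ξ)⟫ := by
        conv_lhs => rw [show p i ξ = p i (p i ξ) from by
          rw [← ContinuousLinearMap.mul_apply, hidem]]
      rw [h3, ← sa_inner (hsa i), hpw i, inner_zero_left]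
    rw [← h1, h2]
  exact inner_self_eq_zero.1 key

lemma p_mul_p0 (i : ℕ) : p i * p0 = 0 := by
  have := congrArg star (p0_mul_p p hsa hidem horth p0 hp0sa hp0idem hp0fix i)
  rwa [star_mul, (hsa i).star_eq, hp0sa.star_eq, star_zero] at this

lemma extFam_sa : ∀ i, IsSelfAdjoint (extFam p0 p i)
  | 0 => hp0sa
  | (n + 1) => hsa n

lemma extFam_idem : ∀ i, extFam p0 p i * extFam p0 p i = extFam p0 p i
  | 0 => hp0idem
  | (n + 1) => hidem n

lemma extFam_orth : ∀ i j, i ≠ j → extFam p0 p i * extFam p0 p j = 0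
  | 0, 0, h => absurd rfl h
  | 0, (j + 1), _ => p0_mul_p p hsa hidem horth p0 hp0sa hp0idem hp0fix j
  | (i + 1), 0, _ => p_mul_p0 p hsa hidem horth p0 hp0sa hp0idem hp0fix i
  | (i + 1), (j + 1), h => horth i j (fun hij => h (by rw [hij]))

/-- Resolution of identity for the original family. -/
lemma res0 (ξ : H) : HasSum (fun j => p j ξ) (ξ - p0 ξ) := by
  have hsummable : Summable fun j => p j ξ :=
    summable_of_orth hsa hidem horth _
      (fun i => by rw [← ContinuousLinearMap.mul_apply, hidem])
      (summable_sq ξ hsa hidem horth)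
  obtain ⟨η, hη⟩ := hsummable
  have hk : ∀ k, p k η = p k ξ := by
    intro k
    have h1 : HasSum (fun j => p k (p j ξ)) (p k η) := hη.mapL (p k)
    have h2 : HasSum (fun j => p k (p j ξ)) (p k (p k ξ)) :=
      hasSum_single k (fun j hj => by
        rw [← ContinuousLinearMap.mul_apply, horth k j (Ne.symm hj)]; rfl)
    have := h1.unique h2
    rwa [← ContinuousLinearMap.mul_apply, hidem] at this
  have h0 : p0 η = 0 := by
    have h1 : HasSum (fun j => p0 (p j ξ)) (p0 η) := hη.mapL p0
    have h2 : HasSum (fun j => p0 (p j ξ)) 0 := by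
      convert hasSum_zero with j
      rw [← ContinuousLinearMap.mul_apply,
        p0_mul_p p hsa hidem horth p0 hp0sa hp0idem hp0fix j]
      rfl
    exact h1.unique h2
  have hfix : p0 (ξ - η) = ξ - η :=
    (hp0fix (ξ - η)).2 (fun i => by rw [map_sub, hk i, sub_self])
  have : ξ - η = p0 ξ := by
    rw [← hfix, map_sub, h0, sub_zero]
  have hηval : η = ξ - p0 ξ := by
    rw [← this]; abel
  rwa [hηval] at hη

/-- Resolution of identity for the extended family. -/
lemma resExt (ξ : H) : HasSum (fun i => extFam p0 p i ξ) ξ := by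
  have h := res0 p hsa hidem horth p0 hp0sa hp0idem hp0fix ξ
  have h' : HasSum (fun n => extFam p0 p (n + 1) ξ) (ξ - p0 ξ) := h
  have := (hasSum_nat_add_iff (f := fun i => extFam p0 p i ξ) 1).1 h'
  simpa [extFam] using this

end Main

end PinchAux

namespace PinchAux

variable {H : Type*} [NormedAddCommGroup H] [InnerProductSpace ℂ H] [CompleteSpace H]

local notation "⟪" x ", " y "⟫" => @inner ℂ _ _ x y

/-- The rank one operator `v ↦ ⟪w, v⟫ • x`. -/
noncomputable def Rop (w x : H) : H →L[ℂ] H := (innerSL ℂ w).smulRight x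

lemma Rop_apply (w x v : H) : Rop w x v = ⟪w, v⟫ • x := rfl

lemma Rop_zero_left (x : H) : Rop 0 x = 0 := by
  ext v; simp [Rop_apply]

lemma mul_Rop (A : H →L[ℂ] H) (w x : H) : A * Rop w x = Rop w (A x) := by
  ext v; simp [Rop_apply, ContinuousLinearMap.mul_apply, map_smul]

lemma Rop_mul_sa {A : H →L[ℂ] H} (hA : IsSelfAdjoint A) (w x : H) :
    Rop w x * A = Rop (A w) x := by
  ext v
  simp only [Rop_apply, ContinuousLinearMap.mul_apply]
  rw [sa_inner hA]

lemma Rop_sub_right (w x y : H) : Rop w x - Rop w y = Rop w (x - y) := by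
  ext v; simp [Rop_apply, smul_sub]

lemma Rop_sa (w : H) : IsSelfAdjoint (Rop w w) := by
  rw [IsSelfAdjoint, ContinuousLinearMap.star_eq_adjoint]
  symm
  rw [ContinuousLinearMap.eq_adjoint_iff]
  intro x y
  simp only [Rop_apply, inner_smul_left, inner_smul_right]
  rw [inner_conj_symm]
  ring

lemma Rop_idem {w : H} (hw : (⟪w, w⟫ : ℂ) = 1) : Rop w w * Rop w w = Rop w w := by
  ext v
  simp only [Rop_apply, ContinuousLinearMap.mul_apply, inner_smul_right, hw, smul_smul]
  ring_nf

lemma Rop_orth {w1 w2 : H} (h : (⟪w1, w2⟫ : ℂ) = 0) (x1 : H) :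
    Rop w1 x1 * Rop w2 w2 = 0 := by
  ext v
  simp only [Rop_apply, ContinuousLinearMap.mul_apply, inner_smul_right, h,
    ContinuousLinearMap.zero_apply, mul_zero, zero_smul]

lemma Rop_compact (w x : H) : IsCompactOperator ⇑(Rop w x) := by
  refine ⟨(fun c : ℂ => c • x) '' Metric.closedBall 0 ‖w‖,
    (isCompact_closedBall 0 ‖w‖).image (continuous_id.smul continuous_const), ?_⟩
  refine Filter.mem_of_superset (Metric.ball_mem_nhds 0 one_pos) ?_
  intro v hv
  refine ⟨⟪w, v⟫, ?_, rfl⟩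
  rw [Metric.mem_closedBall, dist_zero_right]
  calc ‖(⟪w, v⟫ : ℂ)‖ ≤ ‖w‖ * ‖v‖ := norm_inner_le_norm w v
  _ ≤ ‖w‖ * 1 := by
      have : ‖v‖ ≤ 1 := le_of_lt (by simpa [dist_zero_right] using hv)
      exact mul_le_mul_of_nonneg_left this (norm_nonneg w)
  _ = ‖w‖ := mul_one _

lemma sum_compact {ι : Type*} (F : Finset ι) (A : ι → H →L[ℂ] H)
    (hA : ∀ i ∈ F, IsCompactOperator ⇑(A i)) :
    IsCompactOperator ⇑(∑ i ∈ F, A i) := by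
  classical
  induction F using Finset.induction_on with
  | empty => simpa using (isCompactOperator_zero (M₁ := H) (M₂ := H))
  | insert a s hni ih =>
      rw [Finset.sum_insert hni]
      have h1 : IsCompactOperator ⇑(A a) := hA a (Finset.mem_insert_self a s)
      have h2 : IsCompactOperator ⇑(∑ i ∈ s, A i) :=
        ih (fun i hi => hA i (Finset.mem_insert_of_mem hi))
      have := h1.add h2
      rwa [show ⇑(A a) + ⇑(∑ i ∈ s, A i) = ⇑(A a + ∑ i ∈ s, A i) from rfl] at this

end PinchAux

namespace PinchAux

variable {H : Type*} [NormedAddCommGroup H] [InnerProductSpace ℂ H] [CompleteSpace H]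

local notation "⟪" x ", " y "⟫" => @inner ℂ _ _ x y

/-- For a compact operator `c` and a mutually orthogonal family of projections,
`‖B j ∘ c‖` is eventually small. -/
lemma tail_small {c : H →L[ℂ] H} (hc : IsCompactOperator ⇑c)
    {B : ℕ → H →L[ℂ] H} (hB1 : ∀ i, IsSelfAdjoint (B i))
    (hB2 : ∀ i, B i * B i = B i) (hB3 : ∀ i j, i ≠ j → B i * B j = 0)
    {ε : ℝ} (hε : 0 < ε) : ∃ N : ℕ, ∀ j ≥ N, ‖B j * c‖ ≤ ε := by
  obtain ⟨K, hK, hKmem⟩ := hc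
  obtain ⟨r, hr, hball⟩ := Metric.mem_nhds_iff.1 hKmem
  set δ : ℝ := ε * r / 4 with hδ
  have hδpos : 0 < δ := by positivity
  obtain ⟨T, hTfin, hTcover⟩ := Metric.totallyBounded_iff.1 hK.totallyBounded δ hδpos
  have hpt : ∀ w : H, Filter.Tendsto (fun j => B j w) Filter.atTop (nhds 0) := by
    intro w
    exact (summable_of_orth hB1 hB2 hB3 (fun j => B j w)
      (fun i => by rw [← ContinuousLinearMap.mul_apply, hB2])
      (summable_sq w hB1 hB2 hB3)).tendsto_atTop_zero
  have hev : ∀ᶠ j in Filter.atTop, ∀ t ∈ T, ‖B j t‖ ≤ δ := by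
    rw [Filter.eventually_all_finite hTfin]
    intro t _
    have := (hpt t).norm
    rw [norm_zero] at this
    exact this.eventually_le_const hδpos
  obtain ⟨N, hN⟩ := Filter.eventually_atTop.1 hev
  refine ⟨N, fun j hj => ?_⟩
  refine ContinuousLinearMap.opNorm_le_bound _ (le_of_lt hε) (fun v => ?_)
  rcases eq_or_ne v 0 with rfl | hv
  · simp
  · have hvn : 0 < ‖v‖ := norm_pos_iff.2 hv
    set a : ℂ := ((r / 2 * ‖v‖⁻¹ : ℝ) : ℂ) with ha
    set v' : H := a • v with hv'
    have hapos : (0:ℝ) < r / 2 * ‖v‖⁻¹ := by positivity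
    have hv'n : ‖v'‖ = r / 2 := by
      rw [hv', norm_smul, ha, Complex.norm_real, Real.norm_eq_abs,
        abs_of_pos hapos]
      field_simp
    have hmem : c v' ∈ K := by
      apply hball
      rw [Metric.mem_ball, dist_zero_right, hv'n]
      linarith
    obtain ⟨t, ht, htd⟩ := Set.mem_iUnion₂.1 (hTcover hmem)
    have h1 : ‖B j (c v')‖ ≤ 2 * δ := by
      have e1 : B j (c v') = B j (c v' - t) + B j t := by rw [← map_add]; congr 1; abel
      rw [e1]
      have e2 : ‖B j (c v' - t)‖ ≤ ‖c v' - t‖ := contraction (hB1 j) (hB2 j) _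
      have e3 : ‖c v' - t‖ < δ := by
        rw [← dist_eq_norm]; exact Metric.mem_ball.1 htd
      have e4 : ‖B j t‖ ≤ δ := hN j hj t ht
      calc ‖B j (c v' - t) + B j t‖ ≤ ‖B j (c v' - t)‖ + ‖B j t‖ := norm_add_le _ _
      _ ≤ 2 * δ := by linarith
    have h2 : B j (c v') = a • B j (c v) := by
      rw [hv', map_smul, map_smul]
    have h3 : ‖B j (c v')‖ = (r / 2 * ‖v‖⁻¹) * ‖B j (c v)‖ := by
      rw [h2, norm_smul, ha, Complex.norm_real, Real.norm_eq_abs, abs_of_pos hapos]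
    have h4 : ‖(B j * c) v‖ = ‖B j (c v)‖ := rfl
    rw [h4]
    have h5 : (r / 2 * ‖v‖⁻¹) * ‖B j (c v)‖ ≤ 2 * δ := h3 ▸ h1
    rw [hδ] at h5
    have hinv : ‖v‖⁻¹ * ‖v‖ = 1 := inv_mul_cancel₀ hvn.ne'
    nlinarith [mul_le_mul_of_nonneg_right h5 (le_of_lt hvn), norm_nonneg (B j (c v))]
  
end PinchAux

namespace PinchAux

variable {H : Type*} [NormedAddCommGroup H] [InnerProductSpace ℂ H] [CompleteSpace H]

local notation "⟪" x ", " y "⟫" => @inner ℂ _ _ x y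

section Main2

variable (p : ℕ → H →L[ℂ] H)
  (hsa : ∀ i, IsSelfAdjoint (p i))
  (hidem : ∀ i, p i * p i = p i)
  (horth : ∀ i j, i ≠ j → p i * p j = 0)
  (p0 : H →L[ℂ] H) (hp0sa : IsSelfAdjoint p0) (hp0idem : p0 * p0 = p0)
  (hp0fix : ∀ ξ : H, p0 ξ = ξ ↔ ∀ i, p i ξ = 0)
  (u : H →L[ℂ] H) (hu1 : star u * u = 1) (hu2 : u * star u = 1)
  (hucpt : IsCompactOperator ⇑(u - 1))

include hu1 in
lemma u_isom (v : H) : ‖u v‖ = ‖v‖ := by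
  have h1 : (⟪u v, u v⟫ : ℂ) = ⟪v, v⟫ := by
    have h2 : (⟪(star u * u) v, v⟫ : ℂ) = ⟪u v, u v⟫ := by
      rw [ContinuousLinearMap.mul_apply, ContinuousLinearMap.star_eq_adjoint]
      exact ContinuousLinearMap.adjoint_inner_left u v (u v)
    rw [hu1, ContinuousLinearMap.one_apply] at h2
    exact h2.symm
  rw [inner_self_eq_norm_sq_to_K, inner_self_eq_norm_sq_to_K] at h1
  have h3 : ‖u v‖ ^ 2 = ‖v‖ ^ 2 := by exact_mod_cast h1
  rw [← Real.sqrt_sq (norm_nonneg (u v)), ← Real.sqrt_sq (norm_nonneg v), h3]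

include hu1 hucpt in
lemma astar_compact : IsCompactOperator ⇑(star u - 1) := by
  have h1 : star u - 1 = -(star u * (u - 1)) := by
    rw [mul_sub, hu1, mul_one, neg_sub]
  have h2 : IsCompactOperator ⇑(star u * (u - 1)) := by
    have h3 := hucpt.clm_comp (star u)
    have h4 : ⇑(star u) ∘ ⇑(u - 1) = ⇑(star u * (u - 1)) := rfl
    rwa [h4] at h3
  rw [h1]
  have h5 := h2.neg
  rwa [show -⇑(star u * (u - 1)) = ⇑(-(star u * (u - 1))) from rfl] at h5

include hsa hidem horth hp0sa hp0idem hp0fix hu1 hucpt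

lemma blocks_summable :
    Summable fun i => extFam p0 p i * (star u - 1) * extFam p0 p i := by
  set a' := star u - 1 with ha'
  set P := extFam p0 p with hP
  have hPsa := extFam_sa p hsa hidem horth p0 hp0sa hp0idem hp0fix
  have hPidem := extFam_idem p hsa hidem horth p0 hp0sa hp0idem hp0fix
  have hPorth := extFam_orth p hsa hidem horth p0 hp0sa hp0idem hp0fix
  have hPP : ∀ i, P i * (P i * a' * P i) = P i * a' * P i := by
    intro i
    rw [← mul_assoc, ← mul_assoc, hPidem i]
  rw [summable_iff_vanishing_norm]
  intro ε hε
  obtain ⟨N, hN⟩ := tail_small (astar_compact u hu1 hucpt) hsa hidem horth (half_pos hε)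
  refine ⟨Finset.range (N + 1), fun t ht => ?_⟩
  have key : ∀ i ∈ t, ‖P i * a'‖ ≤ ε / 2 := by
    intro i hi
    have hnotin : i ∉ Finset.range (N + 1) := fun h =>
      (Finset.disjoint_left.1 ht) hi h
    match i, hnotin with
    | 0, h => exact absurd (Finset.mem_range.2 (Nat.succ_pos N)) h
    | (j + 1), h =>
      have hj : N ≤ j := by
        by_contra hc
        exact h (Finset.mem_range.2 (by omega))
      exact hN j hj
  have hb : ∀ ξ : H, ‖(∑ i ∈ t, P i * a' * P i) ξ‖ ≤ (ε / 2) * ‖ξ‖ := by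
    intro ξ
    rw [ContinuousLinearMap.sum_apply]
    have hsq : ‖∑ i ∈ t, (P i * a' * P i) ξ‖ ^ 2 = ∑ i ∈ t, ‖(P i * a' * P i) ξ‖ ^ 2 :=
      norm_sum_sq hPsa hPidem hPorth t _ (fun i _ => by
        rw [← ContinuousLinearMap.mul_apply, hPP i])
    have hterm : ∀ i ∈ t, ‖(P i * a' * P i) ξ‖ ^ 2 ≤ (ε / 2) ^ 2 * ‖P i ξ‖ ^ 2 := by
      intro i hi
      have h1 : (P i * a' * P i) ξ = (P i * a') (P i ξ) := rfl
      have h2 : ‖(P i * a') (P i ξ)‖ ≤ ‖P i * a'‖ * ‖P i ξ‖ :=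
        ContinuousLinearMap.le_opNorm _ _
      have h3 : ‖(P i * a') (P i ξ)‖ ≤ (ε / 2) * ‖P i ξ‖ :=
        h2.trans (mul_le_mul_of_nonneg_right (key i hi) (norm_nonneg _))
      rw [h1]
      exact (pow_le_pow_left₀ (norm_nonneg _) h3 2).trans_eq (by ring)
    have hbes := bessel hPsa hPidem hPorth t ξ
    have h4 : ‖∑ i ∈ t, (P i * a' * P i) ξ‖ ^ 2 ≤ (ε / 2) ^ 2 * ‖ξ‖ ^ 2 := by
      rw [hsq]
      calc ∑ i ∈ t, ‖(P i * a' * P i) ξ‖ ^ 2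
          ≤ ∑ i ∈ t, (ε / 2) ^ 2 * ‖P i ξ‖ ^ 2 := Finset.sum_le_sum hterm
      _ = (ε / 2) ^ 2 * ∑ i ∈ t, ‖P i ξ‖ ^ 2 := by rw [Finset.mul_sum]
      _ ≤ (ε / 2) ^ 2 * ‖ξ‖ ^ 2 := mul_le_mul_of_nonneg_left hbes (by positivity)
    nlinarith [norm_nonneg (∑ i ∈ t, (P i * a' * P i) ξ), norm_nonneg ξ,
      mul_nonneg (le_of_lt (half_pos hε)) (norm_nonneg ξ)]
  have h5 : ‖∑ i ∈ t, P i * a' * P i‖ ≤ ε / 2 :=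
    ContinuousLinearMap.opNorm_le_bound _ (le_of_lt (half_pos hε)) hb
  exact lt_of_le_of_lt h5 (half_lt_self hε)

lemma blocks_tsum_compact :
    IsCompactOperator ⇑(∑' i, extFam p0 p i * (star u - 1) * extFam p0 p i) := by
  have hS := (blocks_summable p hsa hidem horth p0 hp0sa hp0idem hp0fix u hu1 hucpt).hasSum
  refine isCompactOperator_of_tendsto hS (Filter.Eventually.of_forall fun t => ?_)
  refine sum_compact t _ (fun i _ => ?_)
  have h1 := ((astar_compact u hu1 hucpt).comp_clm (extFam p0 p i)).clm_comp (extFam p0 p i)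
  have h2 : ⇑(extFam p0 p i) ∘ (⇑(star u - 1) ∘ ⇑(extFam p0 p i))
      = ⇑(extFam p0 p i * (star u - 1) * extFam p0 p i) := rfl
  rwa [h2] at h1

end Main2

end PinchAux

namespace PinchAux

variable {H : Type*} [NormedAddCommGroup H] [InnerProductSpace ℂ H] [CompleteSpace H]

local notation "⟪" x ", " y "⟫" => @inner ℂ _ _ x y

/-- Normalization of a vector. -/
noncomputable def nf (g : H) : H := ((‖g‖⁻¹ : ℝ) : ℂ) • g

lemma nf_zero : nf (0 : H) = 0 := by simp [nf]

lemma nf_smul_norm (g : H) : (‖g‖ : ℂ) • nf g = g := by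
  rcases eq_or_ne g 0 with rfl | hg
  · simp [nf]
  · rw [nf, smul_smul]
    have : ((‖g‖ : ℝ) : ℂ) * ((‖g‖⁻¹ : ℝ) : ℂ) = 1 := by
      rw [← Complex.ofReal_mul, mul_inv_cancel₀ (norm_ne_zero_iff.2 hg)]
      simp
    rw [this, one_smul]

lemma nf_inner_self {g : H} (hg : g ≠ 0) : (⟪nf g, nf g⟫ : ℂ) = 1 := by
  rw [nf, inner_smul_left, inner_smul_right, Complex.conj_ofReal,
    inner_self_eq_norm_sq_to_K]
  have hn : (‖g‖ : ℝ) ≠ 0 := norm_ne_zero_iff.2 hg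
  have hc : ((‖g‖ : ℝ) : ℂ) ≠ 0 := by exact_mod_cast hn
  field_simp
  push_cast; rw [← mul_pow, one_div]; simp [hn]

lemma nf_inner_orth {g1 g2 : H} (h : (⟪g1, g2⟫ : ℂ) = 0) :
    (⟪nf g1, nf g2⟫ : ℂ) = 0 := by
  rw [nf, nf, inner_smul_left, inner_smul_right, h]
  ring

lemma nf_norm_le (g : H) : ‖nf g‖ ≤ 1 := by
  rcases eq_or_ne g 0 with rfl | hg
  · simp [nf]
  · rw [nf, norm_smul, Complex.norm_real, Real.norm_eq_abs,
      abs_of_pos (inv_pos.2 (norm_pos_iff.2 hg)), inv_mul_cancel₀ (norm_ne_zero_iff.2 hg)]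

section PinchComp

variable (p : ℕ → H →L[ℂ] H)
  (hsa : ∀ i, IsSelfAdjoint (p i))
  (hidem : ∀ i, p i * p i = p i)
  (horth : ∀ i j, i ≠ j → p i * p j = 0)

include hsa hidem horth

/-- Pinching a finite sum of adapted rank-one operators. -/
lemma pinch_of_ranked (F : Finset ℕ) (w x : ℕ → H) (hw : ∀ j, p j (w j) = w j) :
    pinch p (∑ j ∈ F, Rop (w j) (x j)) = ∑ i ∈ F, Rop (w i) (p i (x i)) := by
  classical
  have hterm : ∀ i : ℕ, p i * (∑ j ∈ F, Rop (w j) (x j)) * p i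
      = if i ∈ F then Rop (w i) (p i (x i)) else 0 := by
    intro i
    rw [Finset.mul_sum, Finset.sum_mul]
    have h1 : ∀ j ∈ F, p i * Rop (w j) (x j) * p i = Rop (p i (w j)) (p i (x j)) := by
      intro j _
      rw [mul_Rop, Rop_mul_sa (hsa i)]
    rw [Finset.sum_congr rfl h1]
    have hz : ∀ j, j ≠ i → p i (w j) = 0 := by
      intro j hji
      rw [← hw j, ← ContinuousLinearMap.mul_apply, horth i j (Ne.symm hji),
        ContinuousLinearMap.zero_apply]
    split_ifs with hiF
    · rw [Finset.sum_eq_single i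
        (fun j _ hji => by rw [hz j hji]; exact Rop_zero_left _) (fun h => absurd hiF h)]
      rw [hw i]
    · exact Finset.sum_eq_zero fun j hj => by
        rw [hz j (fun hji => hiF (hji ▸ hj))]; exact Rop_zero_left _
  rw [pinch, tsum_eq_sum (s := F) (fun i hi => by rw [hterm i, if_neg hi])]
  exact Finset.sum_congr rfl fun i hi => by rw [hterm i, if_pos hi]

/-- Properties of the rank-one family attached to orthogonal adapted vectors. -/
lemma ranked_family (g : ℕ → H) (hg : ∀ j, p j (g j) = g j) :
    (∀ j, IsSelfAdjoint (Rop (nf (g j)) (nf (g j)))) ∧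
    (∀ j, Rop (nf (g j)) (nf (g j)) * Rop (nf (g j)) (nf (g j)) = Rop (nf (g j)) (nf (g j))) ∧
    (∀ i j, i ≠ j → Rop (nf (g i)) (nf (g i)) * Rop (nf (g j)) (nf (g j)) = 0) := by
  have horthg : ∀ i j, i ≠ j → (⟪g i, g j⟫ : ℂ) = 0 := by
    intro i j hij
    rw [← hg i, ← hg j]
    exact inner_apply_orth hsa hidem horth i j hij _ _
  refine ⟨fun j => Rop_sa _, fun j => ?_, fun i j hij => Rop_orth (nf_inner_orth (horthg i j hij)) _⟩
  rcases eq_or_ne (g j) 0 with hz | hnz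
  · rw [hz, nf_zero, Rop_zero_left, mul_zero]
  · exact Rop_idem (nf_inner_self hnz)

end PinchComp

end PinchAux

namespace PinchAux

variable {H : Type*} [NormedAddCommGroup H] [InnerProductSpace ℂ H] [CompleteSpace H]

local notation "⟪" x ", " y "⟫" => @inner ℂ _ _ x y

section DKey

variable (p : ℕ → H →L[ℂ] H)
  (hsa : ∀ i, IsSelfAdjoint (p i))
  (hidem : ∀ i, p i * p i = p i)
  (horth : ∀ i j, i ≠ j → p i * p j = 0)
  (u : H →L[ℂ] H) (hu1 : star u * u = 1) (hu2 : u * star u = 1)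
  (C : ℝ) (hC : 0 ≤ C)
  (hbound : ∀ y : H →L[ℂ] H, IsCompactOperator ⇑y → ‖y‖ ≤ 1 →
      ‖u * pinch p (star u * y) - pinch p y‖ ≤ C)

include hsa hidem horth hC hbound

lemma d1key (ξ : H) (F : Finset ℕ) :
    ‖∑ j ∈ F, (u * p j * star u - 1) (p j ξ)‖ ≤ C * ‖ξ‖ := by
  classical
  set g : ℕ → H := fun j => p j ξ with hgdef
  have hg : ∀ j, p j (g j) = g j := fun j => by
    rw [hgdef]; simp only []
    rw [← ContinuousLinearMap.mul_apply, hidem]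
  obtain ⟨hr1, hr2, hr3⟩ := ranked_family p hsa hidem horth g hg
  set e : ℕ → H := fun j => nf (g j) with hedef
  have hpe : ∀ j, p j (e j) = e j := by
    intro j
    rw [hedef]; simp only [nf, map_smul, hg j]
  set F' := F.filter (fun j => g j ≠ 0) with hF'
  set y := ∑ j ∈ F', Rop (e j) (e j) with hy
  have hycpt : IsCompactOperator ⇑y := sum_compact _ _ fun i _ => Rop_compact _ _
  have hynorm : ‖y‖ ≤ 1 := by
    refine ContinuousLinearMap.opNorm_le_bound _ zero_le_one fun v => ?_
    rw [one_mul]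
    have h6 := norm_sum_apply_le hr1 hr2 hr3 F' v
    rwa [← ContinuousLinearMap.sum_apply] at h6
  have hstar : star u * y = ∑ j ∈ F', Rop (e j) (star u (e j)) := by
    rw [hy, Finset.mul_sum]
    exact Finset.sum_congr rfl fun j _ => mul_Rop _ _ _
  have hp1 : pinch p (star u * y) = ∑ i ∈ F', Rop (e i) (p i (star u (e i))) := by
    rw [hstar]; exact pinch_of_ranked p hsa hidem horth F' e _ hpe
  have hp2 : pinch p y = y := by
    rw [hy, pinch_of_ranked p hsa hidem horth F' e e hpe]
    exact Finset.sum_congr rfl fun i _ => by rw [hpe i]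
  have hXi : u * pinch p (star u * y) - pinch p y
      = ∑ i ∈ F', Rop (e i) (u (p i (star u (e i))) - e i) := by
    rw [hp1, hp2, hy, Finset.mul_sum, ← Finset.sum_sub_distrib]
    exact Finset.sum_congr rfl fun i _ => by rw [mul_Rop, Rop_sub_right]
  have happ : (u * pinch p (star u * y) - pinch p y) ξ
      = ∑ j ∈ F, (u * p j * star u - 1) (p j ξ) := by
    rw [hXi, ContinuousLinearMap.sum_apply]
    have hterm : ∀ i ∈ F', (Rop (e i) (u (p i (star u (e i))) - e i)) ξ
        = (u * p i * star u - 1) (p i ξ) := by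
      intro i hi
      have hiz : g i ≠ 0 := (Finset.mem_filter.1 hi).2
      rw [Rop_apply]
      have hinner : (⟪e i, ξ⟫ : ℂ) = (‖g i‖ : ℂ) := by
        rw [hedef]; simp only [nf]
        rw [inner_smul_left, Complex.conj_ofReal]
        have h7 : (⟪g i, ξ⟫ : ℂ) = (‖g i‖ : ℂ) ^ 2 := by
          rw [hgdef]; simp only []
          have h5 : (⟪p i ξ, ξ⟫ : ℂ) = ⟪p i (p i ξ), ξ⟫ := by
            rw [← ContinuousLinearMap.mul_apply, hidem]
          rw [h5, sa_inner (hsa i), inner_self_eq_norm_sq_to_K]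
          norm_cast
        rw [h7]
        have hn : (‖g i‖ : ℝ) ≠ 0 := norm_ne_zero_iff.2 hiz
        have hcc : ((‖g i‖ : ℝ) : ℂ) ≠ 0 := by exact_mod_cast hn
        push_cast
        field_simp
      rw [hinner, smul_sub]
      have hsm : ((‖g i‖ : ℝ) : ℂ) • e i = p i ξ := by
        rw [hedef]; exact nf_smul_norm (g i)
      have hsm2 : ((‖g i‖ : ℝ) : ℂ) • u (p i (star u (e i)))
          = u (p i (star u (p i ξ))) := by
        rw [← hsm, map_smul, map_smul, map_smul]
      rw [hsm, hsm2]
      simp only [ContinuousLinearMap.sub_apply, ContinuousLinearMap.one_apply,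
        ContinuousLinearMap.mul_apply]
    rw [Finset.sum_congr rfl hterm]
    refine Finset.sum_subset (Finset.filter_subset _ _) (fun j hjF hjF' => ?_)
    have hz : g j = 0 := by
      by_contra hc
      exact hjF' (Finset.mem_filter.2 ⟨hjF, hc⟩)
    have : p j ξ = 0 := hz
    rw [this, map_zero]
  calc ‖∑ j ∈ F, (u * p j * star u - 1) (p j ξ)‖
      = ‖(u * pinch p (star u * y) - pinch p y) ξ‖ := by rw [happ]
  _ ≤ ‖u * pinch p (star u * y) - pinch p y‖ * ‖ξ‖ :=
      ContinuousLinearMap.le_opNorm _ _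
  _ ≤ C * ‖ξ‖ := mul_le_mul_of_nonneg_right (hbound y hycpt hynorm) (norm_nonneg ξ)

end DKey

end PinchAux

namespace PinchAux

variable {H : Type*} [NormedAddCommGroup H] [InnerProductSpace ℂ H] [CompleteSpace H]

local notation "⟪" x ", " y "⟫" => @inner ℂ _ _ x y

section DKey3

variable (p : ℕ → H →L[ℂ] H)
  (hsa : ∀ i, IsSelfAdjoint (p i))
  (hidem : ∀ i, p i * p i = p i)
  (horth : ∀ i j, i ≠ j → p i * p j = 0)
  (u : H →L[ℂ] H) (hu1 : star u * u = 1)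
  (C : ℝ) (hC : 0 ≤ C)
  (hbound : ∀ y : H →L[ℂ] H, IsCompactOperator ⇑y → ‖y‖ ≤ 1 →
      ‖u * pinch p (star u * y) - pinch p y‖ ≤ C)

include hsa hidem horth hu1 hC hbound

lemma d3key_fin (ζ β : H) (hζ : ∀ i, p i ζ = 0) (F : Finset ℕ) :
    ‖(⟪ζ, u (∑ j ∈ F, p j β)⟫ : ℂ)‖ ≤ C * (‖β‖ * ‖ζ‖) := by
  classical
  set g : ℕ → H := fun j => p j β with hgdef
  have hg : ∀ j, p j (g j) = g j := fun j => by
    rw [hgdef]; simp only []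
    rw [← ContinuousLinearMap.mul_apply, hidem]
  obtain ⟨hr1, hr2, hr3⟩ := ranked_family p hsa hidem horth g hg
  set b : ℕ → H := fun j => nf (g j) with hbdef
  have hpb : ∀ j, p j (b j) = b j := by
    intro j
    rw [hbdef]; simp only [nf, map_smul, hg j]
  set F' := F.filter (fun j => g j ≠ 0) with hF'
  set y0 := ∑ j ∈ F', Rop (b j) (b j) with hy0
  set y := u * y0 with hy
  have hycpt : IsCompactOperator ⇑y := by
    have h1 := (sum_compact F' _ fun i _ => Rop_compact (b i) (b i)).clm_comp u
    have h2 : ⇑u ∘ ⇑(∑ j ∈ F', Rop (b j) (b j)) = ⇑y := rfl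
    rwa [h2] at h1
  have hynorm : ‖y‖ ≤ 1 := by
    refine ContinuousLinearMap.opNorm_le_bound _ zero_le_one fun v => ?_
    rw [one_mul]
    have h6 := norm_sum_apply_le hr1 hr2 hr3 F' v
    rw [← ContinuousLinearMap.sum_apply] at h6
    calc ‖y v‖ = ‖u (y0 v)‖ := rfl
    _ = ‖y0 v‖ := u_isom u hu1 _
    _ ≤ ‖v‖ := h6
  have hsu : star u * y = y0 := by
    rw [hy, ← mul_assoc, hu1, one_mul]
  have hp1 : pinch p (star u * y) = y0 := by
    rw [hsu, hy0, pinch_of_ranked p hsa hidem horth F' b b hpb]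
    exact Finset.sum_congr rfl fun i _ => by rw [hpb i]
  have hymul : y = ∑ j ∈ F', Rop (b j) (u (b j)) := by
    rw [hy, hy0, Finset.mul_sum]
    exact Finset.sum_congr rfl fun j _ => mul_Rop _ _ _
  have hp2 : pinch p y = ∑ i ∈ F', Rop (b i) (p i (u (b i))) := by
    rw [hymul]; exact pinch_of_ranked p hsa hidem horth F' b _ hpb
  have hXi : u * pinch p (star u * y) - pinch p y
      = ∑ i ∈ F', Rop (b i) (u (b i) - p i (u (b i))) := by
    rw [hp1, hp2, ← hy, hymul, ← Finset.sum_sub_distrib]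
    exact Finset.sum_congr rfl fun i _ => by rw [Rop_sub_right]
  set v := ∑ j ∈ F, p j β with hv
  have hvle : ‖v‖ ≤ ‖β‖ := norm_sum_apply_le hsa hidem horth F β
  have hinnerbv : ∀ i ∈ F', (⟪b i, v⟫ : ℂ) = (‖g i‖ : ℂ) := by
    intro i hi
    have hiF : i ∈ F := (Finset.mem_filter.1 hi).1
    have hiz : g i ≠ 0 := (Finset.mem_filter.1 hi).2
    rw [hv, inner_sum]
    rw [Finset.sum_eq_single i
      (fun j _ hji => by
        rw [hbdef]; simp only [nf]
        rw [inner_smul_left]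
        have : (⟪g i, g j⟫ : ℂ) = 0 := by
          rw [hgdef]
          exact inner_apply_orth hsa hidem horth i j (Ne.symm hji) β β
        rw [show (⟪g i, (p j) β⟫ : ℂ) = (⟪g i, g j⟫ : ℂ) from rfl, this, mul_zero])
      (fun h => absurd hiF h)]
    rw [hbdef]; simp only [nf]
    rw [inner_smul_left, Complex.conj_ofReal,
      show (⟪g i, (p i) β⟫ : ℂ) = (⟪g i, g i⟫ : ℂ) from rfl,
      inner_self_eq_norm_sq_to_K]
    have hn : (‖g i‖ : ℝ) ≠ 0 := norm_ne_zero_iff.2 hiz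
    have hcc : ((‖g i‖ : ℝ) : ℂ) ≠ 0 := by exact_mod_cast hn
    push_cast
    field_simp
    norm_cast
  have happ : (u * pinch p (star u * y) - pinch p y) v
      = ∑ j ∈ F, (u (p j β) - p j (u (p j β))) := by
    rw [hXi, ContinuousLinearMap.sum_apply]
    have hterm : ∀ i ∈ F', (Rop (b i) (u (b i) - p i (u (b i)))) v
        = u (p i β) - p i (u (p i β)) := by
      intro i hi
      rw [Rop_apply, hinnerbv i hi, smul_sub]
      have hsm : ((‖g i‖ : ℝ) : ℂ) • b i = p i β := by
        rw [hbdef]; exact nf_smul_norm (g i)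
      have hsm1 : ((‖g i‖ : ℝ) : ℂ) • u (b i) = u (p i β) := by
        rw [← hsm, map_smul]
      have hsm2 : ((‖g i‖ : ℝ) : ℂ) • p i (u (b i)) = p i (u (p i β)) := by
        rw [← hsm, map_smul, map_smul]
      rw [hsm1, hsm2]
    rw [Finset.sum_congr rfl hterm]
    refine Finset.sum_subset (Finset.filter_subset _ _) (fun j hjF hjF' => ?_)
    have hz : g j = 0 := by
      by_contra hc
      exact hjF' (Finset.mem_filter.2 ⟨hjF, hc⟩)
    have hz' : p j β = 0 := hz
    simp [hz']
  have hpair : (⟪ζ, (u * pinch p (star u * y) - pinch p y) v⟫ : ℂ) = ⟪ζ, u v⟫ := by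
    rw [happ, inner_sum]
    have h8 : ∀ j ∈ F, (⟪ζ, u (p j β) - p j (u (p j β))⟫ : ℂ) = ⟪ζ, u (p j β)⟫ := by
      intro j _
      rw [inner_sub_right]
      have h9 : (⟪ζ, p j (u (p j β))⟫ : ℂ) = 0 := by
        rw [← sa_inner (hsa j), hζ j, inner_zero_left]
      rw [h9, sub_zero]
    rw [Finset.sum_congr rfl h8, hv, map_sum u (fun j => (p j) β) F, inner_sum]
  calc ‖(⟪ζ, u v⟫ : ℂ)‖
      = ‖(⟪ζ, (u * pinch p (star u * y) - pinch p y) v⟫ : ℂ)‖ := by rw [hpair]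
  _ ≤ ‖ζ‖ * ‖(u * pinch p (star u * y) - pinch p y) v‖ := norm_inner_le_norm _ _
  _ ≤ ‖ζ‖ * (‖u * pinch p (star u * y) - pinch p y‖ * ‖v‖) :=
      mul_le_mul_of_nonneg_left (ContinuousLinearMap.le_opNorm _ _) (norm_nonneg ζ)
  _ ≤ ‖ζ‖ * (C * ‖β‖) := by
      refine mul_le_mul_of_nonneg_left ?_ (norm_nonneg ζ)
      exact mul_le_mul (hbound y hycpt hynorm) hvle (norm_nonneg v) hC
  _ = C * (‖β‖ * ‖ζ‖) := by ring

lemma d3key (ζ β : H) (hζ : ∀ i, p i ζ = 0) (hβ : HasSum (fun j => p j β) β) :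
    ‖(⟪ζ, u β⟫ : ℂ)‖ ≤ C * (‖β‖ * ‖ζ‖) := by
  have h1 : HasSum (fun j => (innerSL ℂ ζ) (u (p j β))) ((innerSL ℂ ζ) (u β)) :=
    (hβ.mapL u).mapL (innerSL ℂ ζ)
  have h2 : Filter.Tendsto (fun F : Finset ℕ => ‖∑ j ∈ F, (innerSL ℂ ζ) (u (p j β))‖)
      Filter.atTop (nhds ‖(innerSL ℂ ζ) (u β)‖) := h1.norm
  have h3 : ∀ F : Finset ℕ, ∑ j ∈ F, (innerSL ℂ ζ) (u (p j β))
      = (⟪ζ, u (∑ j ∈ F, p j β)⟫ : ℂ) := by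
    intro F
    rw [map_sum u (fun j => (p j) β) F, inner_sum]
    rfl
  have h4 := le_of_tendsto h2 (Filter.Eventually.of_forall fun F => by
    rw [h3 F]
    exact d3key_fin p hsa hidem horth u hu1 C hC hbound ζ β hζ F)
  simpa using h4

end DKey3

end PinchAux

open PinchAux in
/-- Let `u` be a unitary with `u - 1` compact and set `q_i := u p_i u*`
(including `q₀ = u p₀ u*`). Then the series `∑_{i ≥ 0} q_i p_i ξ` converges for every `ξ`,
defining a bounded operator `s`; `s - 1` is compact; `s p_i = q_i s` for every `i ≥ 0`; and if
`C ≥ 0` bounds `‖u * P (u* y) - P y‖` over compact `y` with `‖y‖ ≤ 1`, then `‖s - 1‖ ≤ 3C`. -/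
theorem pinching_section_operator
    {H : Type*} [NormedAddCommGroup H] [InnerProductSpace ℂ H] [CompleteSpace H]
    [TopologicalSpace.SeparableSpace H]
    (hinf : ¬ FiniteDimensional ℂ H)
    (p : ℕ → H →L[ℂ] H)
    (hsa : ∀ i, IsSelfAdjoint (p i))
    (hidem : ∀ i, p i * p i = p i)
    (horth : ∀ i j, i ≠ j → p i * p j = 0)
    (p0 : H →L[ℂ] H) (hp0sa : IsSelfAdjoint p0) (hp0idem : p0 * p0 = p0)
    (hp0fix : ∀ ξ : H, p0 ξ = ξ ↔ ∀ i, p i ξ = 0)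
    (u : H →L[ℂ] H) (hu1 : star u * u = 1) (hu2 : u * star u = 1)
    (hucpt : IsCompactOperator ⇑(u - 1))
    (C : ℝ) (hC : 0 ≤ C)
    (hbound : ∀ y : H →L[ℂ] H, IsCompactOperator ⇑y → ‖y‖ ≤ 1 →
      ‖u * pinch p (star u * y) - pinch p y‖ ≤ C) :
    ∃ s : H →L[ℂ] H,
      (∀ ξ : H, HasSum (fun i => (u * extFam p0 p i * star u) ((extFam p0 p i) ξ)) (s ξ)) ∧
      IsCompactOperator ⇑(s - 1) ∧
      (∀ i, s * extFam p0 p i = (u * extFam p0 p i * star u) * s) ∧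
      ‖s - 1‖ ≤ 3 * C := by
  classical
  have hPsa := extFam_sa p hsa hidem horth p0 hp0sa hp0idem hp0fix
  have hPidem := extFam_idem p hsa hidem horth p0 hp0sa hp0idem hp0fix
  have hPorth := extFam_orth p hsa hidem horth p0 hp0sa hp0idem hp0fix
  set P : ℕ → H →L[ℂ] H := extFam p0 p with hPdef
  set a' : H →L[ℂ] H := star u - 1 with ha'
  have hsum : Summable (fun i => P i * a' * P i) :=
    blocks_summable p hsa hidem horth p0 hp0sa hp0idem hp0fix u hu1 hucpt
  set Kop : H →L[ℂ] H := ∑' i, P i * a' * P i with hKopdef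
  have hKS : HasSum (fun i => P i * a' * P i) Kop := hsum.hasSum
  set s : H →L[ℂ] H := u + u * Kop with hs
  -- part (a)
  have hsA : ∀ ξ : H, HasSum (fun i => (u * P i * star u) ((P i) ξ)) (s ξ) := by
    intro ξ
    have h1 : HasSum (fun i => (P i * a' * P i) ξ) (Kop ξ) :=
      hKS.mapL (ContinuousLinearMap.apply ℂ H ξ)
    have hres : HasSum (fun i => P i ξ) ξ :=
      resExt p hsa hidem horth p0 hp0sa hp0idem hp0fix ξ
    have h2 : HasSum (fun i => u ((P i * a' * P i) ξ) + u (P i ξ)) (u (Kop ξ) + u ξ) :=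
      (h1.mapL u).add (hres.mapL u)
    have hterm : ∀ i, (u * P i * star u) ((P i) ξ)
        = u ((P i * a' * P i) ξ) + u (P i ξ) := by
      intro i
      have hidP : P i (P i ξ) = P i ξ := by
        rw [← ContinuousLinearMap.mul_apply, hPidem]
      simp only [ContinuousLinearMap.mul_apply, ha', ContinuousLinearMap.sub_apply,
        ContinuousLinearMap.one_apply, map_sub, hidP]
      abel
    have h3 : s ξ = u (Kop ξ) + u ξ := by
      rw [hs]
      simp only [ContinuousLinearMap.add_apply, ContinuousLinearMap.mul_apply]
      abel
    rw [h3, show (fun i => (u * P i * star u) ((P i) ξ))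
      = fun i => u ((P i * a' * P i) ξ) + u (P i ξ) from funext hterm]
    exact h2
  refine ⟨s, hsA, ?_, ?_, ?_⟩
  -- part (b)
  · have hb1 : s - 1 = (u - 1) + u * Kop := by rw [hs]; abel
    have hKcpt : IsCompactOperator ⇑Kop := by
      rw [hKopdef]
      exact blocks_tsum_compact p hsa hidem horth p0 hp0sa hp0idem hp0fix u hu1 hucpt
    have h2 : IsCompactOperator ⇑(u * Kop) := by
      have h3 := hKcpt.clm_comp u
      rwa [show ⇑u ∘ ⇑Kop = ⇑(u * Kop) from rfl] at h3
    have h4 := hucpt.add h2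
    rw [hb1]
    rwa [show ⇑(u - 1) + ⇑(u * Kop) = ⇑((u - 1) + u * Kop) from rfl] at h4
  -- part (c)
  · intro i
    have hKPi : Kop * P i = P i * a' * P i := by
      have hz : ∀ j, j ≠ i → (P j * a' * P j) * P i = 0 := fun j hj => by
        rw [mul_assoc, hPorth j i hj, mul_zero]
      have h2 : HasSum (fun j => (P j * a' * P j) * P i) ((P i * a' * P i) * P i) :=
        hasSum_single i hz
      have h3 := (hKS.mul_right (P i)).unique h2
      rw [h3, mul_assoc, hPidem i]
    have hPiK : P i * Kop = P i * a' * P i := by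
      have hz : ∀ j, j ≠ i → P i * (P j * a' * P j) = 0 := fun j hj => by
        simp only [← mul_assoc]
        rw [hPorth i j (fun h => hj (h ▸ rfl)), zero_mul, zero_mul]
      have h2 : HasSum (fun j => P i * (P j * a' * P j)) (P i * (P i * a' * P i)) :=
        hasSum_single i hz
      have h3 := (hKS.mul_left (P i)).unique h2
      rw [h3]
      simp only [← mul_assoc]
      rw [hPidem i]
    have hL : s * P i = u * P i + u * (P i * a' * P i) := by
      rw [hs, add_mul, mul_assoc, hKPi]
    have hR : (u * P i * star u) * s = u * P i + u * (P i * a' * P i) := by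
      rw [hs, mul_add]
      have e1 : (u * P i * star u) * u = u * P i := by
        rw [mul_assoc (u * P i) (star u) u, hu1, mul_one]
      have e2 : (u * P i * star u) * (u * Kop) = u * (P i * a' * P i) := by
        rw [mul_assoc (u * P i) (star u) (u * Kop), ← mul_assoc (star u) u Kop,
          hu1, one_mul, mul_assoc, hPiK]
      rw [e1, e2]
    rw [hL, hR]
  -- part (d)
  · have hnorm3C : (0:ℝ) ≤ 3 * C := by linarith
    refine ContinuousLinearMap.opNorm_le_bound _ hnorm3C fun ξ => ?_
    set f : ℕ → H := fun i => (u * P i * star u) ((P i) ξ) - P i ξ with hf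
    have hres : HasSum (fun i => P i ξ) ξ :=
      resExt p hsa hidem horth p0 hp0sa hp0idem hp0fix ξ
    have hdiff : HasSum f (s ξ - ξ) := (hsA ξ).sub hres
    have h0 : HasSum (fun n => f (n + 1)) (s ξ - ξ - f 0) := by
      refine (hasSum_nat_add_iff (f := f) 1).2 ?_
      rw [Finset.sum_range_one, sub_add_cancel]
      exact hdiff
    -- T1 bound
    have hT1 : ‖s ξ - ξ - f 0‖ ≤ C * ‖ξ‖ := by
      refine le_of_tendsto h0.norm (Filter.Eventually.of_forall fun F => ?_)
      have hFeq : ∑ j ∈ F, f (j + 1) = ∑ j ∈ F, (u * p j * star u - 1) (p j ξ) := by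
        refine Finset.sum_congr rfl fun j _ => ?_
        simp only [hf, hPdef, extFam, ContinuousLinearMap.sub_apply,
          ContinuousLinearMap.one_apply]
      rw [hFeq]
      exact d1key p hsa hidem horth u C hC hbound ξ F
    -- T2 bound
    have hT2 : ‖f 0‖ ≤ C * ‖ξ‖ := by
      set ζ : H := p0 ξ with hζ
      have hζfix : p0 ζ = ζ := ContinuousLinearMap.ext_iff.1 hp0idem ξ
      have hζort : ∀ i, p i ζ = 0 := (hp0fix ζ).1 hζfix
      set w : H := star u ζ with hw
      set β : H := w - p0 w with hβ
      have hβ0 : p0 β = 0 := by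
        have h6 : p0 (p0 w) = p0 w := ContinuousLinearMap.ext_iff.1 hp0idem w
        rw [hβ, map_sub, h6, sub_self]
      have hβsum : HasSum (fun j => p j β) β := by
        have h5 := res0 p hsa hidem horth p0 hp0sa hp0idem hp0fix β
        rwa [hβ0, sub_zero] at h5
      have huw : u w = ζ := by
        rw [hw, ← ContinuousLinearMap.mul_apply, hu2, ContinuousLinearMap.one_apply]
      have hf0 : f 0 = u (p0 w) - ζ := by
        simp only [hf, hPdef, extFam, ContinuousLinearMap.mul_apply, ← hζ, ← hw]
      have hnf0 : ‖f 0‖ = ‖β‖ := by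
        rw [hf0, ← huw, ← map_sub, u_isom u hu1, hβ, norm_sub_rev]
      have e2 : (@inner ℂ _ _ β (p0 w) : ℂ) = 0 := by
        rw [← sa_inner hp0sa, hβ0, inner_zero_left]
      have e1 : (@inner ℂ _ _ β β : ℂ) = @inner ℂ _ _ β w := by
        have e1a : (@inner ℂ _ _ β β : ℂ)
            = @inner ℂ _ _ β w - @inner ℂ _ _ β (p0 w) := by
          rw [← inner_sub_right, ← hβ]
        rw [e1a, e2, sub_zero]
      have e3 : (@inner ℂ _ _ β w : ℂ) = (starRingEnd ℂ) (@inner ℂ _ _ ζ (u β)) := by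
        have e4 : (@inner ℂ _ _ w β : ℂ) = @inner ℂ _ _ ζ (u β) := by
          rw [hw, ContinuousLinearMap.star_eq_adjoint]
          exact ContinuousLinearMap.adjoint_inner_left u β ζ
        rw [← inner_conj_symm, e4]
      have e6 := d3key p hsa hidem horth u hu1 C hC hbound ζ β hζort hβsum
      have e7 : ‖(@inner ℂ _ _ β β : ℂ)‖ = ‖β‖ ^ 2 := by
        rw [inner_self_eq_norm_sq_to_K, norm_pow, RCLike.norm_ofReal, abs_norm]
      have e5 : ‖β‖ ^ 2 ≤ C * (‖β‖ * ‖ζ‖) := by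
        calc ‖β‖ ^ 2 = ‖(@inner ℂ _ _ β β : ℂ)‖ := e7.symm
        _ = ‖(starRingEnd ℂ) (@inner ℂ _ _ ζ (u β))‖ := by rw [e1, e3]
        _ = ‖(@inner ℂ _ _ ζ (u β) : ℂ)‖ := RCLike.norm_conj _
        _ ≤ C * (‖β‖ * ‖ζ‖) := e6
      have hζle : ‖ζ‖ ≤ ‖ξ‖ := by rw [hζ]; exact contraction hp0sa hp0idem ξ
      have hβle : ‖β‖ ≤ C * ‖ζ‖ := by
        rcases eq_or_lt_of_le (norm_nonneg β) with h | h
        · rw [← h]; positivity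
        · nlinarith
      rw [hnf0]
      calc ‖β‖ ≤ C * ‖ζ‖ := hβle
      _ ≤ C * ‖ξ‖ := mul_le_mul_of_nonneg_left hζle hC
    have hfinal : ‖(s - 1) ξ‖ ≤ 2 * C * ‖ξ‖ := by
      have e1 : (s - 1) ξ = (s ξ - ξ - f 0) + f 0 := by
        simp only [ContinuousLinearMap.sub_apply, ContinuousLinearMap.one_apply]
        abel
      rw [e1]
      calc ‖(s ξ - ξ - f 0) + f 0‖ ≤ ‖s ξ - ξ - f 0‖ + ‖f 0‖ := norm_add_le _ _
      _ ≤ C * ‖ξ‖ + C * ‖ξ‖ := add_le_add hT1 hT2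
      _ = 2 * C * ‖ξ‖ := by ring
    calc ‖(s - 1) ξ‖ ≤ 2 * C * ‖ξ‖ := hfinal
    _ ≤ 3 * C * ‖ξ‖ := by nlinarith [norm_nonneg ξ]
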